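/- arXiv:1307.5351 — 3 statements merged into one kernel-verified Lean document; each statement's English description precedes it below -/
import Mathlib

section
/- Under the inversive-plane setup below, each of the sets X₄ and X₅ contains both a positive and a negative real number, and each of the sets Y₂ and Y₃ contains both a positive and a negative real number; equivalently, colors 4 and 5 each occur on both sides of the origin on the X-axis, and colors 2 and 3 each occur on both sides of the origin on ℓ. -/
open OnePoint

/-- A generalized circle in the inversive plane `ℝ² ∪ {∞}` (modeled as `OnePoint ℂ`):
either a Euclidean circle, or an affine line together with the point at infinity. -/
def IsGenCircle (S : Set (OnePoint ℂ)) : Prop :=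
  (∃ c : ℂ, ∃ r : ℝ, 0 < r ∧
      S = (fun z : ℂ => (z : OnePoint ℂ)) '' {z : ℂ | ‖z - c‖ = r}) ∨
  (∃ z₀ e : ℂ, e ≠ 0 ∧
      S = (fun z : ℂ => (z : OnePoint ℂ)) '' {z : ℂ | ∃ t : ℝ, z = z₀ + (t : ℂ) * e} ∪ {∞})

/-- The signed norm on `ℝ² ≅ ℂ`. -/
noncomputable def signedNorm (z : ℂ) : ℝ :=
  if 0 < z.im ∨ (z.im = 0 ∧ 0 ≤ z.re) then ‖z‖ else -‖z‖

/-- The set of signed norms of points of the `X`-axis having color `i`. -/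
noncomputable def xAxisColorSet (Γ : OnePoint ℂ → ℕ) (i : ℕ) : Set ℝ :=
  signedNorm '' {z : ℂ | z.im = 0 ∧ Γ (z : OnePoint ℂ) = i}

/-- The set of signed norms of points of the line through the origin with direction `d`
having color `j`. -/
noncomputable def lineColorSet (Γ : OnePoint ℂ → ℕ) (d : ℂ) (j : ℕ) : Set ℝ :=
  signedNorm '' {z : ℂ | (∃ t : ℝ, z = (t : ℂ) * d) ∧ Γ (z : OnePoint ℂ) = j}

lemma norm_eq_of_sq (z w : ℂ) (h : (z.re)^2 + (z.im)^2 = (w.re)^2 + (w.im)^2) : ‖z‖ = ‖w‖ := by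
  rw [Complex.norm_def, Complex.norm_def]
  congr 1
  rw [Complex.normSq_apply, Complex.normSq_apply]
  nlinarith

lemma key (d₁ d₂ : ℂ) (hD : d₁.re*d₂.im - d₁.im*d₂.re ≠ 0)
    (s t x : ℝ) (hst : s*t < 0) (hx : x ≠ 0) :
    ∃ x' : ℝ, x*x' < 0 ∧ ∃ S : Set (OnePoint ℂ), IsGenCircle S ∧
      (((s:ℂ)*d₁ : ℂ) : OnePoint ℂ) ∈ S ∧ (((t:ℂ)*d₁ : ℂ) : OnePoint ℂ) ∈ S ∧
      (((x:ℂ)*d₂ : ℂ) : OnePoint ℂ) ∈ S ∧ (((x':ℂ)*d₂ : ℂ) : OnePoint ℂ) ∈ S := by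
  have hs : s ≠ 0 := by rintro rfl; simp at hst
  have hd₁ : d₁.re ≠ 0 ∨ d₁.im ≠ 0 := by
    by_contra hc; push_neg at hc; apply hD; rw [hc.1, hc.2]; ring
  have hd₂ : d₂.re ≠ 0 ∨ d₂.im ≠ 0 := by
    by_contra hc; push_neg at hc; apply hD; rw [hc.1, hc.2]; ring
  set n₁ : ℝ := d₁.re^2 + d₁.im^2 with hn₁def
  set n₂ : ℝ := d₂.re^2 + d₂.im^2 with hn₂def
  have hn₁ : 0 < n₁ := by rcases hd₁ with h | h <;> positivity
  have hn₂ : 0 < n₂ := by rcases hd₂ with h | h <;> positivity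
  set β₁ : ℝ := (s+t)*n₁/2 with hβ₁def
  set β₂ : ℝ := (x^2*n₂ + s*t*n₁)/(2*x) with hβ₂def
  set D : ℝ := d₁.re*d₂.im - d₁.im*d₂.re with hDdef
  set c₁ : ℝ := (β₁*d₂.im - β₂*d₁.im)/D with hc₁def
  set c₂ : ℝ := (d₁.re*β₂ - d₂.re*β₁)/D with hc₂def
  set c : ℂ := ⟨c₁, c₂⟩ with hcdef
  obtain ⟨x', hxx', hx'neg⟩ : ∃ x' : ℝ, x*x'*n₂ = s*t*n₁ ∧ x*x' < 0 := by
    refine ⟨s*t*n₁/(x*n₂), by field_simp, ?_⟩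
    have h1 : x * (s*t*n₁/(x*n₂)) = s*t*n₁/n₂ := by field_simp
    rw [h1]
    apply div_neg_of_neg_of_pos _ hn₂
    nlinarith
  have hB₁ : d₁.re*c₁ + d₁.im*c₂ = (s+t)*n₁/2 := by
    rw [hc₁def, hc₂def, hβ₁def]; field_simp; ring
  have hB₂ : 2*x*(d₂.re*c₁ + d₂.im*c₂) = x^2*n₂ + s*t*n₁ := by
    rw [hc₁def, hc₂def, hβ₂def, hβ₁def]; field_simp; ring
  have hre : ∀ u : ℝ, ∀ e : ℂ, ((u:ℂ)*e - c).re = u*e.re - c₁ := by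
    intro u e; simp [hcdef, Complex.mul_re]
  have him : ∀ u : ℝ, ∀ e : ℂ, ((u:ℂ)*e - c).im = u*e.im - c₂ := by
    intro u e; simp [hcdef, Complex.mul_im]
  have h12 : ‖(s:ℂ)*d₁ - c‖ = ‖(t:ℂ)*d₁ - c‖ := by
    apply norm_eq_of_sq
    rw [hre, hre, him, him]
    linear_combination (2*t - 2*s) * hB₁
  have h13 : ‖(s:ℂ)*d₁ - c‖ = ‖(x:ℂ)*d₂ - c‖ := by
    apply norm_eq_of_sq
    rw [hre, hre, him, him]
    linear_combination (-2*s) * hB₁ + hB₂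
  have h14 : ‖(s:ℂ)*d₁ - c‖ = ‖(x':ℂ)*d₂ - c‖ := by
    apply norm_eq_of_sq
    rw [hre, hre, him, him]
    have hgoal : x * ((s*d₁.re - c₁)^2 + (s*d₁.im - c₂)^2) =
        x * ((x'*d₂.re - c₁)^2 + (x'*d₂.im - c₂)^2) := by
      linear_combination (-2*s*x) * hB₁ + x' * hB₂ + (x - x') * hxx'
    exact mul_left_cancel₀ hx hgoal
  set r : ℝ := ‖(s:ℂ)*d₁ - c‖ with hrdef
  have hr : 0 < r := by
    rw [hrdef, norm_pos_iff, sub_ne_zero]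
    intro heq
    have h0 : ‖(x:ℂ)*d₂ - c‖ = 0 := by rw [← h13, hrdef, heq]; simp
    have heq2 : (x:ℂ)*d₂ = c := by rwa [norm_eq_zero, sub_eq_zero] at h0
    have heq3 : (x:ℂ)*d₂ = (s:ℂ)*d₁ := heq2.trans heq.symm
    have er : x*d₂.re = s*d₁.re := by simpa [Complex.mul_re] using congrArg Complex.re heq3
    have ei : x*d₂.im = s*d₁.im := by simpa [Complex.mul_im] using congrArg Complex.im heq3
    apply hD
    have hsx : s*x*(d₁.re*d₂.im - d₁.im*d₂.re) = 0 := by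
      linear_combination (-(x*d₂.im))*er + (x*d₂.re)*ei
    have := mul_ne_zero hs hx
    rw [hDdef]
    rcases mul_eq_zero.1 hsx with h | h
    · exact absurd h this
    · exact h
  refine ⟨x', hx'neg, (fun z : ℂ => (z : OnePoint ℂ)) '' {z : ℂ | ‖z - c‖ = r},
    Or.inl ⟨c, r, hr, rfl⟩, ⟨_, hrdef.symm, rfl⟩, ⟨_, h12.symm.trans hrdef.symm, rfl⟩,
    ⟨_, h13.symm.trans hrdef.symm, rfl⟩, ⟨_, h14.symm.trans hrdef.symm, rfl⟩⟩

lemma signedNorm_real (x : ℝ) : signedNorm (x:ℂ) = x := by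
  unfold signedNorm
  rcases le_or_gt 0 x with h | h
  · rw [if_pos (Or.inr ⟨by simp, by simpa using h⟩)]
    simpa using abs_of_nonneg h
  · rw [if_neg (by simp [not_le.2 h, not_lt.2 h.le] )]
    simp [abs_of_neg h]

lemma signedNorm_smul (t : ℝ) (d : ℂ) (hd : d ≠ 0) :
    signedNorm ((t:ℂ)*d) = t * signedNorm d := by
  have hre : ((t:ℂ)*d).re = t * d.re := by simp [Complex.mul_re]
  have him : ((t:ℂ)*d).im = t * d.im := by simp [Complex.mul_im]
  have hnorm : ‖(t:ℂ)*d‖ = |t| * ‖d‖ := by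
    rw [norm_mul]; simp
  have hd' : d.re ≠ 0 ∨ d.im ≠ 0 := by
    by_contra hc; push_neg at hc
    exact hd (Complex.ext hc.1 hc.2)
  unfold signedNorm
  rcases lt_trichotomy t 0 with ht | ht | ht
  · rw [abs_of_neg ht] at hnorm
    by_cases hcd : 0 < d.im ∨ (d.im = 0 ∧ 0 ≤ d.re)
    · have htd : ¬(0 < ((t:ℂ)*d).im ∨ (((t:ℂ)*d).im = 0 ∧ 0 ≤ ((t:ℂ)*d).re)) := by
        push_neg
        constructor
        · rw [him]; rcases hcd with h | ⟨h1, h2⟩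
          · nlinarith
          · simp [h1]
        · intro h; rw [him] at h
          have h0 : d.im = 0 := by
            rcases mul_eq_zero.1 h with h' | h'
            · exact absurd h' ht.ne
            · exact h'
          rcases hcd with hcd | hcd
          · exact absurd h0 hcd.ne'
          · rw [hre]
            rcases hd' with h' | h'
            · have : 0 < d.re := lt_of_le_of_ne hcd.2 (Ne.symm h')
              nlinarith
            · exact absurd h0 h'
      rw [if_neg htd, if_pos hcd, hnorm]; ring
    · have htd : 0 < ((t:ℂ)*d).im ∨ (((t:ℂ)*d).im = 0 ∧ 0 ≤ ((t:ℂ)*d).re) := by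
        push_neg at hcd
        rcases lt_trichotomy d.im 0 with h | h | h
        · left; rw [him]; nlinarith
        · right
          refine ⟨by rw [him, h, mul_zero], ?_⟩
          rw [hre]
          have := hcd.2 h
          nlinarith
        · exact absurd h (not_lt.2 hcd.1)
      rw [if_pos htd, if_neg hcd, hnorm]; ring
  · subst ht; simp
  · rw [abs_of_pos ht] at hnorm
    by_cases hcd : 0 < d.im ∨ (d.im = 0 ∧ 0 ≤ d.re)
    · have htd : 0 < ((t:ℂ)*d).im ∨ (((t:ℂ)*d).im = 0 ∧ 0 ≤ ((t:ℂ)*d).re) := by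
        rcases hcd with h | ⟨h1, h2⟩
        · left; rw [him]; positivity
        · right; exact ⟨by rw [him, h1, mul_zero], by rw [hre]; positivity⟩
      rw [if_pos htd, if_pos hcd, hnorm]
    · have htd : ¬(0 < ((t:ℂ)*d).im ∨ (((t:ℂ)*d).im = 0 ∧ 0 ≤ ((t:ℂ)*d).re)) := by
        push_neg at hcd
        push_neg
        constructor
        · rw [him]
          rcases lt_trichotomy d.im 0 with h | h | h
          · nlinarith
          · simp [h]
          · exact absurd h (not_lt.2 hcd.1)
        · intro h; rw [him] at h
          have h0 : d.im = 0 := by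
            rcases mul_eq_zero.1 h with h' | h'
            · exact absurd h' ht.ne'
            · exact h'
          rw [hre]
          have := hcd.2 h0
          nlinarith
      rw [if_neg htd, if_neg hcd, hnorm]; ring

lemma signedNorm_ne_zero (d : ℂ) (hd : d ≠ 0) : signedNorm d ≠ 0 := by
  unfold signedNorm
  split_ifs <;> simp [hd]


lemma color_mem (Γ : OnePoint ℂ → ℕ) (hrange : Set.range Γ = {1,2,3,4,5})
    (S : Set (OnePoint ℂ)) (h : (Γ '' S).ncard ≤ 3)
    {p₁ p₂ p₃ p₄ : OnePoint ℂ} (h₁ : p₁ ∈ S) (h₂ : p₂ ∈ S) (h₃ : p₃ ∈ S) (h₄ : p₄ ∈ S)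
    (h12 : Γ p₁ ≠ Γ p₂) (h13 : Γ p₁ ≠ Γ p₃) (h23 : Γ p₂ ≠ Γ p₃) :
    Γ p₄ = Γ p₁ ∨ Γ p₄ = Γ p₂ ∨ Γ p₄ = Γ p₃ := by
  by_contra hcon
  push_neg at hcon
  obtain ⟨e1, e2, e3⟩ := hcon
  have hfin : (Γ '' S).Finite := by
    apply Set.Finite.subset (Set.toFinite ({1,2,3,4,5} : Set ℕ))
    rw [← hrange]; exact Set.image_subset_range Γ S
  have hsub : ({Γ p₄, Γ p₁, Γ p₂, Γ p₃} : Set ℕ) ⊆ Γ '' S := by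
    intro y hy
    rcases hy with rfl | rfl | rfl | rfl
    · exact Set.mem_image_of_mem Γ h₄
    · exact Set.mem_image_of_mem Γ h₁
    · exact Set.mem_image_of_mem Γ h₂
    · exact Set.mem_image_of_mem Γ h₃
  have hcard : ({Γ p₄, Γ p₁, Γ p₂, Γ p₃} : Set ℕ).ncard = 4 := by
    rw [Set.ncard_insert_of_notMem (by simp [e1, e2, e3]) (Set.toFinite _),
        Set.ncard_insert_of_notMem (by simp [h12, h13]) (Set.toFinite _),
        Set.ncard_insert_of_notMem (by simp [h23]) (Set.toFinite _),
        Set.ncard_singleton]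
  have := Set.ncard_le_ncard hsub hfin
  omega

/-- Claim 1 of the `n = 2` proof: colors 4 and 5 occur on both sides of the origin on the
`X`-axis, and colors 2 and 3 occur on both sides of the origin on the line `ℓ`. -/
theorem colors_on_both_sides
    (Γ : OnePoint ℂ → ℕ)
    (hrange : Set.range Γ = {1, 2, 3, 4, 5})
    (h3 : ∀ S : Set (OnePoint ℂ), IsGenCircle S → (Γ '' S).ncard ≤ 3)
    (h0 : Γ ((0 : ℂ) : OnePoint ℂ) = 1) (hinf : Γ ∞ = 1)
    (h1 : Γ ((1 : ℂ) : OnePoint ℂ) = 5)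
    (hneg : ∃ x : ℝ, x < 0 ∧ Γ (((x : ℂ)) : OnePoint ℂ) = 4)
    (hX : Γ '' ((fun z : ℂ => (z : OnePoint ℂ)) '' {z : ℂ | z.im = 0} ∪ {∞}) = {1, 4, 5})
    (d : ℂ) (hd : d ≠ 0) (hdim : d.im ≠ 0)
    (hL : Γ '' ((fun z : ℂ => (z : OnePoint ℂ)) '' {z : ℂ | ∃ t : ℝ, z = (t : ℂ) * d} ∪ {∞}) =
      {1, 2, 3}) :
    ((∃ a ∈ xAxisColorSet Γ 4, 0 < a) ∧ (∃ a ∈ xAxisColorSet Γ 4, a < 0)) ∧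
    ((∃ a ∈ xAxisColorSet Γ 5, 0 < a) ∧ (∃ a ∈ xAxisColorSet Γ 5, a < 0)) ∧
    ((∃ b ∈ lineColorSet Γ d 2, 0 < b) ∧ (∃ b ∈ lineColorSet Γ d 2, b < 0)) ∧
    ((∃ b ∈ lineColorSet Γ d 3, 0 < b) ∧ (∃ b ∈ lineColorSet Γ d 3, b < 0)) := by
  -- colors on the two lines
  have hΓline : ∀ u : ℝ, Γ (((u:ℂ)*d : ℂ) : OnePoint ℂ) ∈ ({1,2,3} : Set ℕ) := by
    intro u; rw [← hL]
    exact ⟨(((u:ℂ)*d : ℂ) : OnePoint ℂ), Or.inl ⟨(u:ℂ)*d, ⟨u, rfl⟩, rfl⟩, rfl⟩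
  have hΓaxis : ∀ y : ℝ, Γ (((y:ℂ)) : OnePoint ℂ) ∈ ({1,4,5} : Set ℕ) := by
    intro y; rw [← hX]
    exact ⟨(((y:ℂ)) : OnePoint ℂ), Or.inl ⟨(y:ℂ), by simp, rfl⟩, rfl⟩
  have hline_pt : ∀ j : ℕ, j = 2 ∨ j = 3 →
      ∃ u : ℝ, u ≠ 0 ∧ Γ (((u:ℂ)*d : ℂ) : OnePoint ℂ) = j := by
    intro j hj
    have hj' : j ∈ ({1,2,3} : Set ℕ) := by rcases hj with rfl | rfl <;> simp
    rw [← hL] at hj'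
    obtain ⟨w, hw, hΓw⟩ := hj'
    rcases hw with ⟨z, ⟨u, rfl⟩, rfl⟩ | hw
    · refine ⟨u, ?_, hΓw⟩
      rintro rfl
      rw [show ((0:ℝ):ℂ)*d = 0 by simp] at hΓw
      rw [h0] at hΓw
      rcases hj with rfl | rfl <;> omega
    · simp only [Set.mem_singleton_iff] at hw
      subst hw
      rw [hinf] at hΓw
      rcases hj with rfl | rfl <;> omega
  obtain ⟨a, ha, hΓa⟩ := hneg
  have hΓa' : Γ (((a:ℂ)*1 : ℂ) : OnePoint ℂ) = 4 := by rwa [mul_one]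
  have hΓ1' : Γ ((((1:ℝ):ℂ)*1 : ℂ) : OnePoint ℂ) = 5 := by
    rw [show (((1:ℝ):ℂ)*1 : ℂ) = 1 by norm_num]; exact h1
  -- Claim for the line ℓ: each of colors 2,3 occurs with parameters of both signs
  have claim1 : ∀ j : ℕ, j = 2 ∨ j = 3 → ∃ p q : ℝ, p*q < 0 ∧
      Γ (((p:ℂ)*d : ℂ) : OnePoint ℂ) = j ∧ Γ (((q:ℂ)*d : ℂ) : OnePoint ℂ) = j := by
    intro j hj
    obtain ⟨u, hu, hΓu⟩ := hline_pt j hj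
    obtain ⟨x', hxx', S, hS, hm1, hm2, hm3, hm4⟩ :=
      key 1 d (by simp [hdim]) a 1 u (by rwa [mul_one]) hu
    rw [show ((a:ℂ)*1 : ℂ) = ((a:ℂ)) by rw [mul_one]] at hm1
    have h4 := color_mem Γ hrange S (h3 S hS) hm1 hm2 hm3 hm4
      (by rw [hΓa, hΓ1']; omega)
      (by rw [hΓa, hΓu]; rcases hj with rfl | rfl <;> omega)
      (by rw [hΓ1', hΓu]; rcases hj with rfl | rfl <;> omega)
    have hmem := hΓline x'
    refine ⟨u, x', hxx', hΓu, ?_⟩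
    rw [hΓa, hΓ1', hΓu] at h4
    simp only [Set.mem_insert_iff, Set.mem_singleton_iff] at hmem
    rcases h4 with h | h | h
    · rw [h] at hmem; omega
    · rw [h] at hmem; omega
    · exact h
  obtain ⟨p2, q2, hpq2, hp2, hq2⟩ := claim1 2 (Or.inl rfl)
  obtain ⟨p3, q3, hpq3, hp3, hq3⟩ := claim1 3 (Or.inr rfl)
  -- choose a color-2 point and a color-3 point on opposite sides
  obtain ⟨u, v, huv, hΓu2, hΓv3⟩ : ∃ u v : ℝ, u*v < 0 ∧
      Γ (((u:ℂ)*d : ℂ) : OnePoint ℂ) = 2 ∧ Γ (((v:ℂ)*d : ℂ) : OnePoint ℂ) = 3 := by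
    rcases lt_trichotomy (p2*p3) 0 with h | h | h
    · exact ⟨p2, p3, h, hp2, hp3⟩
    · have hp2ne : p2 ≠ 0 := by rintro rfl; simp at hpq2
      have hp3ne : p3 ≠ 0 := by rintro rfl; simp at hpq3
      exact absurd h (mul_ne_zero hp2ne hp3ne)
    · refine ⟨q2, p3, ?_, hq2, hp3⟩
      by_contra hcon
      push_neg at hcon
      have hp3ne : p3 ≠ 0 := by rintro rfl; simp at h
      have h2' : (p2*q2)*(p3*p3) < 0 := mul_neg_of_neg_of_pos hpq2 (mul_self_pos.2 hp3ne)
      nlinarith [mul_nonneg hcon h.le, h2']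
  -- circle through u·d (color 2), v·d (color 3) and a real point
  have claim2 : ∀ y : ℝ, y ≠ 0 → (Γ (((y:ℂ)) : OnePoint ℂ) = 4 ∨ Γ (((y:ℂ)) : OnePoint ℂ) = 5) →
      ∃ y' : ℝ, y*y' < 0 ∧ Γ (((y':ℂ)) : OnePoint ℂ) = Γ (((y:ℂ)) : OnePoint ℂ) := by
    intro y hy hy45
    obtain ⟨y', hyy', S, hS, hm1, hm2, hm3, hm4⟩ :=
      key d 1 (by simp [hdim]) u v y huv hy
    rw [show ((y:ℂ)*1 : ℂ) = ((y:ℂ)) by rw [mul_one]] at hm3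
    rw [show ((y':ℂ)*1 : ℂ) = ((y':ℂ)) by rw [mul_one]] at hm4
    have h4 := color_mem Γ hrange S (h3 S hS) hm1 hm2 hm3 hm4
      (by rw [hΓu2, hΓv3]; omega)
      (by rw [hΓu2]; rcases hy45 with h | h <;> rw [h] <;> omega)
      (by rw [hΓv3]; rcases hy45 with h | h <;> rw [h] <;> omega)
    refine ⟨y', hyy', ?_⟩
    have hmem := hΓaxis y'
    simp only [Set.mem_insert_iff, Set.mem_singleton_iff] at hmem
    rw [hΓu2, hΓv3] at h4
    rcases h4 with h | h | h
    · rw [h] at hmem; omega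
    · rw [h] at hmem; omega
    · exact h
  obtain ⟨a', ha'prod, hΓa'col⟩ := claim2 a ha.ne (Or.inl hΓa)
  rw [hΓa] at hΓa'col
  have ha'pos : 0 < a' := by
    rcases lt_trichotomy a' 0 with h | h | h
    · nlinarith
    · rw [h] at ha'prod; simp at ha'prod
    · exact h
  obtain ⟨b', hb'prod, hΓb'col⟩ := claim2 1 one_ne_zero
    (Or.inr (by rw [show (((1:ℝ):ℂ)) = (1:ℂ) by norm_num]; exact h1))
  rw [show (((1:ℝ):ℂ)) = (1:ℂ) by norm_num, h1] at hΓb'col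
  have hb'neg : b' < 0 := by nlinarith
  -- assemble conclusions
  have haxis : ∀ y : ℝ, ∀ i : ℕ, Γ (((y:ℂ)) : OnePoint ℂ) = i → y ∈ xAxisColorSet Γ i := by
    intro y i hyi
    exact ⟨(y:ℂ), ⟨by simp, hyi⟩, signedNorm_real y⟩
  have hlineb : ∀ j : ℕ, (∃ p q : ℝ, p*q < 0 ∧
      Γ (((p:ℂ)*d : ℂ) : OnePoint ℂ) = j ∧ Γ (((q:ℂ)*d : ℂ) : OnePoint ℂ) = j) →
      (∃ b ∈ lineColorSet Γ d j, 0 < b) ∧ (∃ b ∈ lineColorSet Γ d j, b < 0) := by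
    rintro j ⟨p, q, hpq, hp, hq⟩
    have hσ : signedNorm d ≠ 0 := signedNorm_ne_zero d hd
    have hmp : p * signedNorm d ∈ lineColorSet Γ d j :=
      ⟨(p:ℂ)*d, ⟨⟨p, rfl⟩, hp⟩, signedNorm_smul p d hd⟩
    have hmq : q * signedNorm d ∈ lineColorSet Γ d j :=
      ⟨(q:ℂ)*d, ⟨⟨q, rfl⟩, hq⟩, signedNorm_smul q d hd⟩
    have hσ2 : 0 < signedNorm d * signedNorm d := mul_self_pos.2 hσ
    have hprod : (p * signedNorm d) * (q * signedNorm d) < 0 := by nlinarith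
    rcases lt_trichotomy (p * signedNorm d) 0 with h | h | h
    · exact ⟨⟨q * signedNorm d, hmq, by nlinarith⟩, ⟨p * signedNorm d, hmp, h⟩⟩
    · rw [h] at hprod; simp at hprod
    · exact ⟨⟨p * signedNorm d, hmp, h⟩, ⟨q * signedNorm d, hmq, by nlinarith⟩⟩
  refine ⟨⟨⟨a', haxis a' 4 hΓa'col, ha'pos⟩, ⟨a, haxis a 4 hΓa, ha⟩⟩,
    ⟨⟨1, haxis 1 5 (by rw [show (((1:ℝ):ℂ)) = (1:ℂ) by norm_num]; exact h1), one_pos⟩,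
      ⟨b', haxis b' 5 hΓb'col, hb'neg⟩⟩,
    hlineb 2 ⟨p2, q2, hpq2, hp2, hq2⟩,
    hlineb 3 ⟨p3, q3, hpq3, hp3, hq3⟩⟩
end

section
/- Under the inversive-plane setup below, for each i ∈ {4,5}: if x ∈ X_i, y₂ ∈ Y₂ and y₃ ∈ Y₃, then y₂·y₃/x ∈ X_i. Similarly, for each j ∈ {2,3}: if y ∈ Y_j, x₄ ∈ X₄ and x₅ ∈ X₅, then x₄·x₅/y ∈ Y_j. -/
open OnePoint

lemma signedNorm_ofReal (x : ℝ) : signedNorm (x : ℂ) = x := by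
  rcases le_or_gt 0 x with h | h
  · simp [signedNorm, h, Real.norm_eq_abs, abs_of_nonneg h]
  · simp [signedNorm, h.not_ge, h.not_gt, Real.norm_eq_abs, abs_of_neg h]

lemma abs_signedNorm (z : ℂ) : |signedNorm z| = ‖z‖ := by
  unfold signedNorm
  split_ifs
  · exact abs_of_nonneg (norm_nonneg z)
  · rw [abs_neg]; exact abs_of_nonneg (norm_nonneg z)

lemma signedNorm_real_mul (t : ℝ) (w : ℂ) (hw : w.im ≠ 0) :
    signedNorm ((t : ℂ) * w) = t * signedNorm w := by
  unfold signedNorm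
  have him : ((t : ℂ) * w).im = t * w.im := by simp [Complex.mul_im]
  have hn : ‖(t : ℂ) * w‖ = |t| * ‖w‖ := by simp [norm_mul]
  rcases lt_trichotomy t 0 with ht | ht | ht
  · rcases lt_or_gt_of_ne hw with h | h
    · rw [if_pos (Or.inl (by rw [him]; exact mul_pos_of_neg_of_neg ht h)),
        if_neg (by simp [not_or, h.not_gt, hw]), hn, abs_of_neg ht]; ring
    · rw [if_neg (by simp [not_or, him, (mul_neg_of_neg_of_pos ht h).not_gt,
          (mul_neg_of_neg_of_pos ht h).ne]),
        if_pos (Or.inl h), hn, abs_of_neg ht]; ring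
  · subst ht; simp
  · rcases lt_or_gt_of_ne hw with h | h
    · rw [if_neg (by simp [not_or, him, (mul_neg_of_pos_of_neg ht h).not_gt,
          (mul_neg_of_pos_of_neg ht h).ne]),
        if_neg (by simp [not_or, h.not_gt, hw]), hn, abs_of_pos ht]; ring
    · rw [if_pos (Or.inl (by rw [him]; exact mul_pos ht h)), if_pos (Or.inl h), hn,
        abs_of_pos ht]

lemma normSq_eq_norm_eq {z w : ℂ} (h : Complex.normSq z = Complex.normSq w) : ‖z‖ = ‖w‖ := by
  rw [show ‖z‖ = Real.sqrt (Complex.normSq z) from rfl,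
    show ‖w‖ = Real.sqrt (Complex.normSq w) from rfl, h]

lemma concyclic (x x' y y' : ℝ) (hk : x * x' = y * y') (hy : y ≠ 0)
    (u : ℂ) (hu : Complex.normSq u = 1) (hui : u.im ≠ 0) :
    ∃ c : ℂ, ∃ r : ℝ, 0 < r ∧ ‖(x : ℂ) - c‖ = r ∧ ‖(x' : ℂ) - c‖ = r ∧
      ‖(y : ℂ) * u - c‖ = r ∧ ‖(y' : ℂ) * u - c‖ = r := by
  have hu2 : u.re * u.re + u.im * u.im = 1 := by rw [← Complex.normSq_apply, hu]
  set cre : ℝ := (x + x') / 2 with hcre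
  set cim : ℝ := ((y + y') / 2 - (x + x') / 2 * u.re) / u.im with hcim
  set c : ℂ := ⟨cre, cim⟩ with hc
  have key : ∀ z : ℂ, Complex.normSq (z - c) = (z.re - cre) ^ 2 + (z.im - cim) ^ 2 := by
    intro z
    simp only [Complex.normSq_apply, Complex.sub_re, Complex.sub_im, hc]
    ring
  have e1 : Complex.normSq ((x' : ℂ) - c) = Complex.normSq ((x : ℂ) - c) := by
    rw [key, key]; simp only [Complex.ofReal_re, Complex.ofReal_im, hcre]; ring
  have e2 : Complex.normSq ((y : ℂ) * u - c) = Complex.normSq ((x : ℂ) - c) := by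
    rw [key, key]
    simp only [Complex.ofReal_re, Complex.ofReal_im, Complex.mul_re, Complex.mul_im,
      hcre, hcim]
    field_simp
    ring_nf
    linear_combination (4 * y ^ 2 * u.im ^ 2) * hu2 + (4 * u.im ^ 2) * hk
  have e3 : Complex.normSq ((y' : ℂ) * u - c) = Complex.normSq ((x : ℂ) - c) := by
    rw [key, key]
    simp only [Complex.ofReal_re, Complex.ofReal_im, Complex.mul_re, Complex.mul_im,
      hcre, hcim]
    field_simp
    ring_nf
    linear_combination (4 * y' ^ 2 * u.im ^ 2) * hu2 + (4 * u.im ^ 2) * hk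
  refine ⟨c, ‖(x : ℂ) - c‖, ?_, rfl, normSq_eq_norm_eq e1, normSq_eq_norm_eq e2,
    normSq_eq_norm_eq e3⟩
  rcases (norm_nonneg ((x : ℂ) - c)).lt_or_eq with h | h
  · exact h
  · exfalso
    have hxc : (x : ℂ) = c := by
      have h' := h.symm; rw [norm_eq_zero, sub_eq_zero] at h'; exact h'
    have hyc : (y : ℂ) * u = c := by
      have h2 : ‖(y : ℂ) * u - c‖ = 0 := by rw [normSq_eq_norm_eq e2, ← h]
      rw [norm_eq_zero, sub_eq_zero] at h2; exact h2
    have him : ((y : ℂ) * u).im = ((x : ℂ)).im := by rw [hyc, ← hxc]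
    simp only [Complex.mul_im, Complex.ofReal_re, Complex.ofReal_im] at him
    have : y * u.im = 0 := by linarith
    rcases mul_eq_zero.mp this with h' | h'
    · exact hy h'
    · exact hui h'

lemma four_colors {Γ : OnePoint ℂ → ℕ} (hrange : Set.range Γ = {1, 2, 3, 4, 5})
    {S : Set (OnePoint ℂ)} (hcard : (Γ '' S).ncard ≤ 3)
    {p₁ p₂ p₃ p₄ : OnePoint ℂ} (h₁ : p₁ ∈ S) (h₂ : p₂ ∈ S) (h₃ : p₃ ∈ S) (h₄ : p₄ ∈ S)
    (d₁₂ : Γ p₁ ≠ Γ p₂) (d₁₃ : Γ p₁ ≠ Γ p₃) (d₂₃ : Γ p₂ ≠ Γ p₃) :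
    Γ p₄ = Γ p₁ ∨ Γ p₄ = Γ p₂ ∨ Γ p₄ = Γ p₃ := by
  by_contra hcon
  push_neg at hcon
  obtain ⟨n₁, n₂, n₃⟩ := hcon
  have hfin : (Γ '' S).Finite := by
    apply Set.Finite.subset (s := ({1, 2, 3, 4, 5} : Set ℕ)) (Set.toFinite _)
    rw [← hrange]
    exact Set.image_subset_range Γ S
  have hsub : ({Γ p₄, Γ p₁, Γ p₂, Γ p₃} : Set ℕ) ⊆ Γ '' S := by
    intro a ha
    simp only [Set.mem_insert_iff, Set.mem_singleton_iff] at ha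
    rcases ha with rfl | rfl | rfl | rfl
    exacts [⟨p₄, h₄, rfl⟩, ⟨p₁, h₁, rfl⟩, ⟨p₂, h₂, rfl⟩, ⟨p₃, h₃, rfl⟩]
  have hle := Set.ncard_le_ncard hsub hfin
  have h4 : ({Γ p₄, Γ p₁, Γ p₂, Γ p₃} : Set ℕ).ncard = 4 := by
    rw [Set.ncard_insert_of_notMem (by simp [n₁, n₂, n₃]) (Set.toFinite _),
      Set.ncard_insert_of_notMem (by simp [d₁₂, d₁₃]) (Set.toFinite _),
      Set.ncard_insert_of_notMem (by simp [d₂₃]) (Set.toFinite _),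
      Set.ncard_singleton]
  omega

/-- Claim 2 of the `n = 2` proof: for `i ∈ {4,5}`, `x ∈ Xᵢ`, `y₂ ∈ Y₂`, `y₃ ∈ Y₃`,
we have `y₂·y₃/x ∈ Xᵢ`; and for `j ∈ {2,3}`, `y ∈ Y_j`, `x₄ ∈ X₄`, `x₅ ∈ X₅`,
we have `x₄·x₅/y ∈ Y_j`. -/
theorem function_h_claim
    (Γ : OnePoint ℂ → ℕ)
    (hrange : Set.range Γ = {1, 2, 3, 4, 5})
    (h3 : ∀ S : Set (OnePoint ℂ), IsGenCircle S → (Γ '' S).ncard ≤ 3)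
    (h0 : Γ ((0 : ℂ) : OnePoint ℂ) = 1) (hinf : Γ ∞ = 1)
    (h1 : Γ ((1 : ℂ) : OnePoint ℂ) = 5)
    (hneg : ∃ x : ℝ, x < 0 ∧ Γ (((x : ℂ)) : OnePoint ℂ) = 4)
    (hX : Γ '' ((fun z : ℂ => (z : OnePoint ℂ)) '' {z : ℂ | z.im = 0} ∪ {∞}) = {1, 4, 5})
    (d : ℂ) (hd : d ≠ 0) (hdim : d.im ≠ 0)
    (hL : Γ '' ((fun z : ℂ => (z : OnePoint ℂ)) '' {z : ℂ | ∃ t : ℝ, z = (t : ℂ) * d} ∪ {∞}) =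
      {1, 2, 3}) :
    (∀ i ∈ ({4, 5} : Set ℕ), ∀ x ∈ xAxisColorSet Γ i,
      ∀ y₂ ∈ lineColorSet Γ d 2, ∀ y₃ ∈ lineColorSet Γ d 3,
        y₂ * y₃ / x ∈ xAxisColorSet Γ i) ∧
    (∀ j ∈ ({2, 3} : Set ℕ), ∀ y ∈ lineColorSet Γ d j,
      ∀ x₄ ∈ xAxisColorSet Γ 4, ∀ x₅ ∈ xAxisColorSet Γ 5,
        x₄ * x₅ / y ∈ lineColorSet Γ d j) := by
  -- setup
  set s : ℝ := signedNorm d with hsdef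
  have hdnorm : ‖d‖ ≠ 0 := norm_ne_zero_iff.mpr hd
  have hs : s ≠ 0 := by
    intro h
    apply hdnorm
    rw [← abs_signedNorm d, ← hsdef, h, abs_zero]
  set u : ℂ := ((s⁻¹ : ℝ) : ℂ) * d with hudef
  have hui : u.im ≠ 0 := by
    rw [hudef]
    simp only [Complex.mul_im, Complex.ofReal_re, Complex.ofReal_im]
    intro h
    rcases mul_eq_zero.mp (by linarith : s⁻¹ * d.im = 0) with h' | h'
    · exact hs (inv_eq_zero.mp h')
    · exact hdim h'
  have hsnu : signedNorm u = 1 := by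
    rw [hudef, signedNorm_real_mul _ _ hdim, ← hsdef, inv_mul_cancel₀ hs]
  have hnu : Complex.normSq u = 1 := by
    have h1' : ‖u‖ = 1 := by rw [← abs_signedNorm u, hsnu, abs_one]
    rw [← Complex.sq_norm, h1', one_pow]
  have hscz : (s : ℂ) ≠ 0 := by exact_mod_cast hs
  -- membership characterizations
  have xMem : ∀ (i : ℕ) (v : ℝ), v ∈ xAxisColorSet Γ i ↔ Γ (((v : ℂ)) : OnePoint ℂ) = i := by
    intro i v
    constructor
    · rintro ⟨z, ⟨him, hΓ⟩, hsn⟩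
      have hz : z = ((z.re : ℝ) : ℂ) := Complex.ext rfl (by simp [him])
      rw [hz] at hΓ hsn
      rw [signedNorm_ofReal] at hsn
      rw [← hsn]
      exact hΓ
    · intro h
      exact ⟨(v : ℂ), ⟨Complex.ofReal_im v, h⟩, signedNorm_ofReal v⟩
  have lineMem : ∀ (j : ℕ) (v : ℝ),
      v ∈ lineColorSet Γ d j ↔ Γ (((v : ℂ) * u : ℂ) : OnePoint ℂ) = j := by
    intro j v
    constructor
    · rintro ⟨z, ⟨⟨t, rfl⟩, hΓ⟩, hsn⟩
      rw [signedNorm_real_mul _ _ hdim, ← hsdef] at hsn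
      have : (v : ℂ) * u = (t : ℂ) * d := by
        rw [← hsn, hudef]
        push_cast
        field_simp
      rw [this]
      exact hΓ
    · intro h
      refine ⟨(v : ℂ) * u, ⟨⟨v * s⁻¹, ?_⟩, h⟩, ?_⟩
      · rw [hudef]; push_cast; ring
      · rw [signedNorm_real_mul _ _ hui, hsnu, mul_one]
  -- colors appearing on the axis and the line
  have axisColors : ∀ v : ℝ,
      Γ (((v : ℂ)) : OnePoint ℂ) = 1 ∨ Γ (((v : ℂ)) : OnePoint ℂ) = 4 ∨
        Γ (((v : ℂ)) : OnePoint ℂ) = 5 := by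
    intro v
    have hmem : Γ (((v : ℂ)) : OnePoint ℂ) ∈ ({1, 4, 5} : Set ℕ) := by
      rw [← hX]
      exact ⟨((v : ℂ) : OnePoint ℂ), Or.inl ⟨(v : ℂ), Complex.ofReal_im v, rfl⟩, rfl⟩
    simpa using hmem
  have lineColors : ∀ v : ℝ,
      Γ (((v : ℂ) * u : ℂ) : OnePoint ℂ) = 1 ∨ Γ (((v : ℂ) * u : ℂ) : OnePoint ℂ) = 2 ∨
        Γ (((v : ℂ) * u : ℂ) : OnePoint ℂ) = 3 := by
    intro v
    have hmem : Γ (((v : ℂ) * u : ℂ) : OnePoint ℂ) ∈ ({1, 2, 3} : Set ℕ) := by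
      rw [← hL]
      refine ⟨(((v : ℂ) * u : ℂ) : OnePoint ℂ),
        Or.inl ⟨(v : ℂ) * u, ⟨v * s⁻¹, ?_⟩, rfl⟩, rfl⟩
      rw [hudef]; push_cast; ring
    simpa using hmem
  have hΓ0 : Γ (((0 : ℝ) : ℂ) : OnePoint ℂ) = 1 := by
    rw [show ((0 : ℝ) : ℂ) = (0 : ℂ) by norm_num]; exact h0
  constructor
  · -- part 1
    intro i hi x hx y₂ hy₂ y₃ hy₃
    have hi' : i = 4 ∨ i = 5 := by simpa using hi
    have hΓx : Γ (((x : ℂ)) : OnePoint ℂ) = i := (xMem i x).mp hx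
    have hΓ2 : Γ (((y₂ : ℂ) * u : ℂ) : OnePoint ℂ) = 2 := (lineMem 2 y₂).mp hy₂
    have hΓ3 : Γ (((y₃ : ℂ) * u : ℂ) : OnePoint ℂ) = 3 := (lineMem 3 y₃).mp hy₃
    have hxne : x ≠ 0 := by
      rintro rfl
      rw [hΓ0] at hΓx
      omega
    have hy₂ne : y₂ ≠ 0 := by
      rintro rfl
      rw [show ((0 : ℝ) : ℂ) * u = ((0 : ℝ) : ℂ) by push_cast; ring, hΓ0] at hΓ2
      omega
    obtain ⟨c, r, hr, m1, m2, m3, m4⟩ :=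
      concyclic x (y₂ * y₃ / x) y₂ y₃ (by field_simp) hy₂ne u hnu hui
    set S : Set (OnePoint ℂ) := (fun z : ℂ => (z : OnePoint ℂ)) '' {z : ℂ | ‖z - c‖ = r}
      with hSdef
    have hcard : (Γ '' S).ncard ≤ 3 := h3 S (Or.inl ⟨c, r, hr, rfl⟩)
    have hfc := four_colors hrange hcard
      (p₁ := ((x : ℂ) : OnePoint ℂ)) (p₂ := (((y₂ : ℂ) * u : ℂ) : OnePoint ℂ))
      (p₃ := (((y₃ : ℂ) * u : ℂ) : OnePoint ℂ))
      (p₄ := (((y₂ * y₃ / x : ℝ) : ℂ) : OnePoint ℂ))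
      ⟨(x : ℂ), m1, rfl⟩ ⟨(y₂ : ℂ) * u, m3, rfl⟩ ⟨(y₃ : ℂ) * u, m4, rfl⟩
      ⟨((y₂ * y₃ / x : ℝ) : ℂ), m2, rfl⟩
      (by rw [hΓx, hΓ2]; omega) (by rw [hΓx, hΓ3]; omega) (by rw [hΓ2, hΓ3]; omega)
    rw [hΓx, hΓ2, hΓ3] at hfc
    have haxis := axisColors (y₂ * y₃ / x)
    rw [xMem]
    omega
  · -- part 2
    intro j hj y hy x₄ hx₄ x₅ hx₅
    have hj' : j = 2 ∨ j = 3 := by simpa using hj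
    have hΓy : Γ (((y : ℂ) * u : ℂ) : OnePoint ℂ) = j := (lineMem j y).mp hy
    have hΓ4 : Γ (((x₄ : ℂ)) : OnePoint ℂ) = 4 := (xMem 4 x₄).mp hx₄
    have hΓ5 : Γ (((x₅ : ℂ)) : OnePoint ℂ) = 5 := (xMem 5 x₅).mp hx₅
    have hyne : y ≠ 0 := by
      rintro rfl
      rw [show ((0 : ℝ) : ℂ) * u = ((0 : ℝ) : ℂ) by push_cast; ring, hΓ0] at hΓy
      omega
    obtain ⟨c, r, hr, m1, m2, m3, m4⟩ :=
      concyclic x₄ x₅ y (x₄ * x₅ / y) (by field_simp) hyne u hnu hui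
    set S : Set (OnePoint ℂ) := (fun z : ℂ => (z : OnePoint ℂ)) '' {z : ℂ | ‖z - c‖ = r}
      with hSdef
    have hcard : (Γ '' S).ncard ≤ 3 := h3 S (Or.inl ⟨c, r, hr, rfl⟩)
    have hfc := four_colors hrange hcard
      (p₁ := ((x₄ : ℂ) : OnePoint ℂ)) (p₂ := ((x₅ : ℂ) : OnePoint ℂ))
      (p₃ := (((y : ℂ) * u : ℂ) : OnePoint ℂ))
      (p₄ := (((x₄ * x₅ / y : ℝ) : ℂ) * u : OnePoint ℂ))
      ⟨(x₄ : ℂ), m1, rfl⟩ ⟨(x₅ : ℂ), m2, rfl⟩ ⟨(y : ℂ) * u, m3, rfl⟩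
      ⟨((x₄ * x₅ / y : ℝ) : ℂ) * u, m4, rfl⟩
      (by rw [hΓ4, hΓ5]; omega) (by rw [hΓ4, hΓy]; omega) (by rw [hΓ5, hΓy]; omega)
    rw [hΓ4, hΓ5, hΓy] at hfc
    have hline := lineColors (x₄ * x₅ / y)
    rw [lineMem]
    omega
end

section
/- Under the inversive-plane setup below, the set X₅ is a subgroup of the multiplicative group ℝ^× of nonzero real numbers, each of the sets Y₂, Y₃ and X₄ is a coset of X₅ in ℝ^×, and moreover x⁴ ∈ X₅ for every x ∈ X₄ ∪ Y₂ ∪ Y₃. -/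
open OnePoint

lemma normsq (z : ℂ) : ‖z‖^2 = z.re^2 + z.im^2 := by
  rw [Complex.sq_norm, Complex.normSq_apply]; ring

lemma exists_circle (d : ℂ) (hdim : d.im ≠ 0) (x₁ x₂ t₁ t₂ : ℝ)
    (hprod : x₁ * x₂ = t₁ * t₂ * ‖d‖^2)
    (hne : x₁ ≠ x₂ ∨ t₁ ≠ t₂) :
    ∃ S : Set (OnePoint ℂ), IsGenCircle S ∧
      (((x₁:ℂ)) : OnePoint ℂ) ∈ S ∧ (((x₂:ℂ)) : OnePoint ℂ) ∈ S ∧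
      ((((t₁:ℂ)*d : ℂ)) : OnePoint ℂ) ∈ S ∧ ((((t₂:ℂ)*d : ℂ)) : OnePoint ℂ) ∈ S := by
  have hk : ‖d‖^2 = d.re^2 + d.im^2 := normsq d
  set k : ℝ := ‖d‖^2 with hkdef
  set Rb : ℝ := -(x₁+x₂)/2 with hRb
  set Ib : ℝ := (Rb * d.re + k*(t₁+t₂)/2) / d.im with hIb
  have hIb' : Rb * d.re - Ib * d.im = -(k*(t₁+t₂)/2) := by
    rw [hIb]; field_simp; ring
  set cc : ℂ := ⟨-Rb, Ib⟩ with hcc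
  set ρ : ℝ := Rb^2 + Ib^2 - x₁*x₂ with hρ
  have hx : ∀ x : ℝ, x^2 - (x₁+x₂)*x + x₁*x₂ = 0 → ‖(x:ℂ) - cc‖^2 = ρ := by
    intro x h
    rw [normsq]
    have h1 : ((x:ℂ) - cc).re = x + Rb := by simp [hcc]; try ring
    have h2 : ((x:ℂ) - cc).im = -Ib := by simp [hcc]
    rw [h1, h2, hρ, hRb]
    nlinarith [h]
  have ht : ∀ t : ℝ, t^2 - (t₁+t₂)*t + t₁*t₂ = 0 → ‖(t:ℂ)*d - cc‖^2 = ρ := by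
    intro t h
    rw [normsq]
    have h1 : ((t:ℂ)*d - cc).re = t*d.re + Rb := by simp [hcc]; try ring
    have h2 : ((t:ℂ)*d - cc).im = t*d.im - Ib := by simp [hcc]
    rw [h1, h2, hρ]
    have e1 : (t*d.re + Rb)^2 + (t*d.im - Ib)^2
        = t^2*k + 2*t*(Rb*d.re - Ib*d.im) + Rb^2 + Ib^2 := by
      rw [hk]; ring
    rw [e1, hIb', hprod]
    nlinarith [h]
  have hx1 : ‖(x₁:ℂ) - cc‖^2 = ρ := hx x₁ (by ring)
  have hx2 : ‖(x₂:ℂ) - cc‖^2 = ρ := hx x₂ (by ring)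
  have ht1 : ‖(t₁:ℂ)*d - cc‖^2 = ρ := ht t₁ (by ring)
  have ht2 : ‖(t₂:ℂ)*d - cc‖^2 = ρ := ht t₂ (by ring)
  have hρnn : 0 ≤ ρ := hx1 ▸ sq_nonneg _ |>.trans_eq rfl
  have hρpos : 0 < ρ := by
    rcases hρnn.lt_or_eq with h | h
    · exact h
    · exfalso
      have hzero : ∀ w : ℂ, ‖w - cc‖^2 = ρ → w = cc := by
        intro w hw
        have : ‖w - cc‖ = 0 := by
          have := hw.trans h.symm
          nlinarith [norm_nonneg (w - cc)]
        rw [norm_eq_zero, sub_eq_zero] at this; exact this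
      rcases hne with h' | h'
      · exact h' (Complex.ofReal_inj.mp ((hzero _ hx1).trans (hzero _ hx2).symm))
      · have hd0 : d ≠ 0 := fun hh => hdim (by rw [hh]; rfl)
        have : ((t₁:ℂ) - t₂) * d = 0 := by
          rw [sub_mul, (hzero _ ht1).trans (hzero _ ht2).symm, sub_self]
        rcases mul_eq_zero.mp this with h'' | h''
        · exact h' (Complex.ofReal_inj.mp (by rwa [sub_eq_zero] at h''))
        · exact hd0 h''
  refine ⟨(fun z : ℂ => (z : OnePoint ℂ)) '' {z : ℂ | ‖z - cc‖ = Real.sqrt ρ},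
    Or.inl ⟨cc, Real.sqrt ρ, Real.sqrt_pos.mpr hρpos, rfl⟩, ?_, ?_, ?_, ?_⟩
  · exact ⟨_, by rw [Set.mem_setOf_eq, ← hx1, Real.sqrt_sq (norm_nonneg _)], rfl⟩
  · exact ⟨_, by rw [Set.mem_setOf_eq, ← hx2, Real.sqrt_sq (norm_nonneg _)], rfl⟩
  · exact ⟨_, by rw [Set.mem_setOf_eq, ← ht1, Real.sqrt_sq (norm_nonneg _)], rfl⟩
  · exact ⟨_, by rw [Set.mem_setOf_eq, ← ht2, Real.sqrt_sq (norm_nonneg _)], rfl⟩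

lemma card_ge (Γ : OnePoint ℂ → ℕ) (hrange : Set.range Γ = {1, 2, 3, 4, 5})
    (h3 : ∀ S : Set (OnePoint ℂ), IsGenCircle S → (Γ '' S).ncard ≤ 3)
    (S : Set (OnePoint ℂ)) (hS : IsGenCircle S) (F : Finset ℕ)
    (hsub : (F : Set ℕ) ⊆ Γ '' S) : F.card ≤ 3 := by
  have hfin : (Γ '' S).Finite := by
    refine Set.Finite.subset (Set.toFinite ({1,2,3,4,5} : Set ℕ)) ?_
    rw [← hrange]; exact Set.image_subset_range Γ S
  calc F.card = (F : Set ℕ).ncard := (Set.ncard_coe_finset F).symm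
    _ ≤ (Γ '' S).ncard := Set.ncard_le_ncard hsub hfin
    _ ≤ 3 := h3 S hS

lemma ruleA (Γ : OnePoint ℂ → ℕ) (hrange : Set.range Γ = {1, 2, 3, 4, 5})
    (h3 : ∀ S : Set (OnePoint ℂ), IsGenCircle S → (Γ '' S).ncard ≤ 3)
    (d : ℂ) (hdim : d.im ≠ 0)
    (hXmem : ∀ x : ℝ, Γ ((x:ℂ) : OnePoint ℂ) = 1 ∨ Γ ((x:ℂ) : OnePoint ℂ) = 4 ∨
      Γ ((x:ℂ) : OnePoint ℂ) = 5)
    (x₁ x₂ t₁ t₂ : ℝ) (hprod : x₁ * x₂ = t₁ * t₂ * ‖d‖^2)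
    (hc2 : Γ (((t₁:ℂ)*d : ℂ) : OnePoint ℂ) = 2) (hc3 : Γ (((t₂:ℂ)*d : ℂ) : OnePoint ℂ) = 3) :
    Γ ((x₁:ℂ) : OnePoint ℂ) = Γ ((x₂:ℂ) : OnePoint ℂ) := by
  by_contra hne
  have htne : t₁ ≠ t₂ := by
    intro h; subst h; rw [hc2] at hc3; exact absurd hc3 (by norm_num)
  obtain ⟨S, hS, hm1, hm2, hm3, hm4⟩ := exists_circle d hdim x₁ x₂ t₁ t₂ hprod (Or.inr htne)
  have hsub : ((({Γ ((x₁:ℂ) : OnePoint ℂ), Γ ((x₂:ℂ) : OnePoint ℂ), 2, 3} : Finset ℕ)) : Set ℕ)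
      ⊆ Γ '' S := by
    intro n hn
    simp only [Finset.coe_insert, Set.mem_insert_iff, Finset.coe_singleton,
      Set.mem_singleton_iff] at hn
    rcases hn with h | h | h | h
    · exact h ▸ ⟨_, hm1, rfl⟩
    · exact h ▸ ⟨_, hm2, rfl⟩
    · exact h ▸ ⟨_, hm3, hc2⟩
    · exact h ▸ ⟨_, hm4, hc3⟩
  have hcard : (({Γ ((x₁:ℂ) : OnePoint ℂ), Γ ((x₂:ℂ) : OnePoint ℂ), 2, 3} : Finset ℕ)).card = 4 := by
    rcases hXmem x₁ with h | h | h <;> rcases hXmem x₂ with h' | h' | h' <;>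
      rw [h, h'] <;> first | exact absurd (h.trans h'.symm) hne | decide
  have := card_ge Γ hrange h3 S hS _ hsub
  omega

lemma ruleB (Γ : OnePoint ℂ → ℕ) (hrange : Set.range Γ = {1, 2, 3, 4, 5})
    (h3 : ∀ S : Set (OnePoint ℂ), IsGenCircle S → (Γ '' S).ncard ≤ 3)
    (d : ℂ) (hdim : d.im ≠ 0)
    (hLmem : ∀ t : ℝ, Γ (((t:ℂ)*d : ℂ) : OnePoint ℂ) = 1 ∨ Γ (((t:ℂ)*d : ℂ) : OnePoint ℂ) = 2 ∨
      Γ (((t:ℂ)*d : ℂ) : OnePoint ℂ) = 3)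
    (x₁ x₂ t₁ t₂ : ℝ) (hprod : x₁ * x₂ = t₁ * t₂ * ‖d‖^2)
    (hc4 : Γ ((x₁:ℂ) : OnePoint ℂ) = 4) (hc5 : Γ ((x₂:ℂ) : OnePoint ℂ) = 5) :
    Γ (((t₁:ℂ)*d : ℂ) : OnePoint ℂ) = Γ (((t₂:ℂ)*d : ℂ) : OnePoint ℂ) := by
  by_contra hne
  have hxne : x₁ ≠ x₂ := by
    intro h; subst h; rw [hc4] at hc5; exact absurd hc5 (by norm_num)
  obtain ⟨S, hS, hm1, hm2, hm3, hm4⟩ := exists_circle d hdim x₁ x₂ t₁ t₂ hprod (Or.inl hxne)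
  have hsub : ((({4, 5, Γ (((t₁:ℂ)*d : ℂ) : OnePoint ℂ), Γ (((t₂:ℂ)*d : ℂ) : OnePoint ℂ)} :
      Finset ℕ)) : Set ℕ) ⊆ Γ '' S := by
    intro n hn
    simp only [Finset.coe_insert, Set.mem_insert_iff, Finset.coe_singleton,
      Set.mem_singleton_iff] at hn
    rcases hn with h | h | h | h
    · exact h ▸ ⟨_, hm1, hc4⟩
    · exact h ▸ ⟨_, hm2, hc5⟩
    · exact h ▸ ⟨_, hm3, rfl⟩
    · exact h ▸ ⟨_, hm4, rfl⟩
  have hcard : (({4, 5, Γ (((t₁:ℂ)*d : ℂ) : OnePoint ℂ), Γ (((t₂:ℂ)*d : ℂ) : OnePoint ℂ)} :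
      Finset ℕ)).card = 4 := by
    rcases hLmem t₁ with h | h | h <;> rcases hLmem t₂ with h' | h' | h' <;>
      rw [h, h'] <;> first | exact absurd (h.trans h'.symm) hne | decide
  have := card_ge Γ hrange h3 S hS _ hsub
  omega

lemma signedNorm_tmul (d : ℂ) (hdim : d.im ≠ 0) (t : ℝ) :
    signedNorm ((t:ℂ)*d) = t * signedNorm d := by
  have him : ((t:ℂ)*d).im = t * d.im := by simp
  have hre : ((t:ℂ)*d).re = t * d.re := by simp
  have hnorm : ‖(t:ℂ)*d‖ = |t| * ‖d‖ := by rw [norm_mul, Complex.norm_real, Real.norm_eq_abs]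
  unfold signedNorm
  rw [him, hre, hnorm]
  rcases lt_trichotomy t 0 with ht | ht | ht <;> rcases hdim.lt_or_gt with hd | hd
  · rw [if_pos (Or.inl (mul_pos_of_neg_of_neg ht hd)), if_neg, abs_of_neg ht]
    · ring
    · rintro (h | ⟨h, -⟩) <;> linarith
  · rw [if_neg, if_pos (Or.inl hd), abs_of_neg ht]
    · ring
    · rintro (h | ⟨h, -⟩)
      · nlinarith
      · exact absurd (by nlinarith : d.im = 0) hdim
  · subst ht; simp
  · subst ht; simp
  · rw [if_neg, if_neg, abs_of_pos ht]
    · ring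
    · rintro (h | ⟨h, -⟩) <;> linarith
    · rintro (h | ⟨h, -⟩)
      · nlinarith
      · exact absurd (by nlinarith : d.im = 0) hdim
  · rw [if_pos (Or.inl (mul_pos ht hd)), if_pos (Or.inl hd), abs_of_pos ht]

lemma xset (Γ : OnePoint ℂ → ℕ) (i : ℕ) :
    xAxisColorSet Γ i = {x : ℝ | Γ ((x:ℂ) : OnePoint ℂ) = i} := by
  ext x
  constructor
  · rintro ⟨z, ⟨him, hcol⟩, rfl⟩
    have hz : ((z.re:ℝ):ℂ) = z := Complex.ext (by simp) (by simp [him])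
    have h1 : signedNorm z = z.re := by
      rw [← hz, signedNorm_real]; exact (Complex.ofReal_re z.re).symm
    rw [Set.mem_setOf_eq, h1, hz]
    exact hcol
  · intro h
    exact ⟨(x:ℂ), ⟨Complex.ofReal_im x, h⟩, signedNorm_real x⟩

lemma lset (Γ : OnePoint ℂ → ℕ) (d : ℂ) (hdim : d.im ≠ 0) (j : ℕ) :
    lineColorSet Γ d j =
      (fun t : ℝ => signedNorm d * t) '' {t : ℝ | Γ (((t:ℂ)*d : ℂ) : OnePoint ℂ) = j} := by
  ext x
  constructor
  · rintro ⟨z, ⟨⟨t, rfl⟩, hcol⟩, rfl⟩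
    exact ⟨t, hcol, by rw [signedNorm_tmul d hdim t]; ring⟩
  · rintro ⟨t, hcol, rfl⟩
    exact ⟨(t:ℂ)*d, ⟨⟨t, rfl⟩, hcol⟩, by rw [signedNorm_tmul d hdim t]; ring⟩

lemma core (k : ℝ) (hk0 : 0 < k) (G F : ℝ → ℕ)
    (hG0 : G 0 = 1) (hG1 : G 1 = 5) (hF0 : F 0 = 1)
    (a : ℝ) (ha4 : G a = 4)
    (u₀ : ℝ) (hu₀ : F u₀ = 2) (v₀ : ℝ) (hv₀ : F v₀ = 3)
    (RA : ∀ u v x₁ x₂ : ℝ, F u = 2 → F v = 3 → x₁ * x₂ = u * v * k → G x₁ = G x₂)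
    (RB : ∀ p q t₁ t₂ : ℝ, G p = 4 → G q = 5 → p * q = t₁ * t₂ * k → F t₁ = F t₂) :
    (∀ x y : ℝ, G x = 5 → G y = 5 → G (x*y) = 5) ∧
    (∀ x : ℝ, G x = 5 → G x⁻¹ = 5) ∧
    ({t : ℝ | F t = 2} = (fun g => u₀ * g) '' {x : ℝ | G x = 5}) ∧
    ({t : ℝ | F t = 3} = (fun g => v₀ * g) '' {x : ℝ | G x = 5}) ∧
    ({x : ℝ | G x = 4} = (fun g => a * g) '' {x : ℝ | G x = 5}) ∧
    (∀ x : ℝ, G x = 4 → G (x^4) = 5) ∧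
    (∀ u : ℝ, F u = 2 → G (k^2 * u^4) = 5) ∧
    (∀ v : ℝ, F v = 3 → G (k^2 * v^4) = 5) := by
  have hkne : k ≠ 0 := hk0.ne'
  have n2 : ∀ {u : ℝ}, F u = 2 → u ≠ 0 := by
    rintro u h rfl; rw [hF0] at h; norm_num at h
  have n3 : ∀ {v : ℝ}, F v = 3 → v ≠ 0 := by
    rintro v h rfl; rw [hF0] at h; norm_num at h
  have n4 : ∀ {p : ℝ}, G p = 4 → p ≠ 0 := by
    rintro p h rfl; rw [hG0] at h; norm_num at h
  have n5 : ∀ {q : ℝ}, G q = 5 → q ≠ 0 := by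
    rintro q h rfl; rw [hG0] at h; norm_num at h
  have ha0 : a ≠ 0 := n4 ha4
  have hu0 : u₀ ≠ 0 := n2 hu₀
  have hv0 : v₀ ≠ 0 := n3 hv₀
  -- inversion rules
  have invC : ∀ u v x : ℝ, F u = 2 → F v = 3 → x ≠ 0 → G (u*v*k/x) = G x := by
    intro u v x hu hv hx
    exact RA u v _ x hu hv (by field_simp)
  have invF : ∀ p q t : ℝ, G p = 4 → G q = 5 → t ≠ 0 → F (p*q/(k*t)) = F t := by
    intro p q t hp hq ht
    exact RB p q _ t hp hq (by field_simp)
  -- two-step multiplication rules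
  have mulC : ∀ u u' v v' x : ℝ, F u = 2 → F u' = 2 → F v = 3 → F v' = 3 → x ≠ 0 →
      G (x*(u'*v')/(u*v)) = G x := by
    intro u u' v v' x hu hu' hv hv' hx
    have h1 := invC u v x hu hv hx
    have hne : u*v*k/x ≠ 0 := by
      exact div_ne_zero (mul_ne_zero (mul_ne_zero (n2 hu) (n3 hv)) hkne) hx
    have h2 := invC u' v' _ hu' hv' hne
    have e : u'*v'*k/(u*v*k/x) = x*(u'*v')/(u*v) := by
      rw [div_div_eq_mul_div, div_eq_div_iff
        (mul_ne_zero (mul_ne_zero (n2 hu) (n3 hv)) hkne) (mul_ne_zero (n2 hu) (n3 hv))]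
      ring
    rw [e] at h2
    exact h2.trans h1
  have mulF : ∀ p p' q q' t : ℝ, G p = 4 → G p' = 4 → G q = 5 → G q' = 5 → t ≠ 0 →
      F (t*(p'*q')/(p*q)) = F t := by
    intro p p' q q' t hp hp' hq hq' ht
    have h1 := invF p q t hp hq ht
    have hne : p*q/(k*t) ≠ 0 := by
      exact div_ne_zero (mul_ne_zero (n4 hp) (n5 hq)) (mul_ne_zero hkne ht)
    have h2 := invF p' q' _ hp' hq' hne
    have e : p'*q'/(k*(p*q/(k*t))) = t*(p'*q')/(p*q) := by
      rw [← mul_div_assoc, div_div_eq_mul_div, div_eq_div_iff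
        (mul_ne_zero hkne (mul_ne_zero (n4 hp) (n5 hq))) (mul_ne_zero (n4 hp) (n5 hq))]
      ring
    rw [e] at h2
    exact h2.trans h1
  -- ratio actions
  have E5F : ∀ q t : ℝ, G q = 5 → t ≠ 0 → F (t*q) = F t := by
    intro q t hq ht
    have := mulF a a 1 q t ha4 ha4 hG1 hq ht
    rwa [show t*(a*q)/(a*1) = t*q by rw [mul_one, div_eq_iff ha0]; ring] at this
  have ratio2G : ∀ u u' x : ℝ, F u = 2 → F u' = 2 → x ≠ 0 → G (x*u'/u) = G x := by
    intro u u' x hu hu' hx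
    have := mulC u u' v₀ v₀ x hu hu' hv₀ hv₀ hx
    rwa [show x*(u'*v₀)/(u*v₀) = x*u'/u by rw [div_eq_div_iff (mul_ne_zero (n2 hu) hv0) (n2 hu)]; ring] at this
  have ratio3G : ∀ v v' x : ℝ, F v = 3 → F v' = 3 → x ≠ 0 → G (x*v'/v) = G x := by
    intro v v' x hv hv' hx
    have := mulC u₀ u₀ v v' x hu₀ hu₀ hv hv' hx
    rwa [show x*(u₀*v')/(u₀*v) = x*v'/v by rw [div_eq_div_iff (mul_ne_zero hu0 (n3 hv)) (n3 hv)]; ring] at this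
  have ratio4F : ∀ p p' t : ℝ, G p = 4 → G p' = 4 → t ≠ 0 → F (t*p'/p) = F t := by
    intro p p' t hp hp' ht
    have := mulF p p' 1 1 t hp hp' hG1 hG1 ht
    rwa [show t*(p'*1)/(p*1) = t*p'/p by field_simp] at this
  have E5G : ∀ q x : ℝ, G q = 5 → x ≠ 0 → G (x*q) = G x := by
    intro q x hq hx
    have h2 : F (u₀*q) = 2 := by rw [E5F q u₀ hq hu0, hu₀]
    have := ratio2G u₀ (u₀*q) x hu₀ h2 hx
    rwa [show x*(u₀*q)/u₀ = x*q by rw [div_eq_iff hu0]; ring] at this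
  have ratio4G : ∀ p p' x : ℝ, G p = 4 → G p' = 4 → x ≠ 0 → G (x*p'/p) = G x := by
    intro p p' x hp hp' hx
    have h2 : F (u₀*p'/p) = 2 := by rw [ratio4F p p' u₀ hp hp' hu0, hu₀]
    have := ratio2G u₀ (u₀*p'/p) x hu₀ h2 hx
    rwa [show x*(u₀*p'/p)/u₀ = x*p'/p by rw [← mul_div_assoc, div_div, div_eq_div_iff (mul_ne_zero (n4 hp) hu0) (n4 hp)]; ring] at this
  -- the basic conclusions
  have mul5 : ∀ x y : ℝ, G x = 5 → G y = 5 → G (x*y) = 5 := by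
    intro x y hx hy
    rw [E5G y x hy (n5 hx)]; exact hx
  have inv5 : ∀ x : ℝ, G x = 5 → G x⁻¹ = 5 := by
    intro x hx
    have := E5G x x⁻¹ hx (inv_ne_zero (n5 hx))
    rw [inv_mul_cancel₀ (n5 hx), hG1] at this
    exact this.symm
  have set2 : {t : ℝ | F t = 2} = (fun g => u₀ * g) '' {x : ℝ | G x = 5} := by
    ext t
    constructor
    · intro ht
      refine ⟨t/u₀, ?_, by field_simp⟩
      have := ratio2G u₀ t 1 hu₀ ht one_ne_zero
      rw [one_mul, hG1] at this
      exact this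
    · rintro ⟨g, hg, rfl⟩
      have := E5F g u₀ hg hu0
      rw [Set.mem_setOf_eq, this, hu₀]
  have set3 : {t : ℝ | F t = 3} = (fun g => v₀ * g) '' {x : ℝ | G x = 5} := by
    ext t
    constructor
    · intro ht
      refine ⟨t/v₀, ?_, by field_simp⟩
      have := ratio3G v₀ t 1 hv₀ ht one_ne_zero
      rw [one_mul, hG1] at this
      exact this
    · rintro ⟨g, hg, rfl⟩
      have := E5F g v₀ hg hv0
      rw [Set.mem_setOf_eq, this, hv₀]
  have set4 : {x : ℝ | G x = 4} = (fun g => a * g) '' {x : ℝ | G x = 5} := by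
    ext x
    constructor
    · intro hx
      refine ⟨x/a, ?_, by field_simp⟩
      have := ratio4G a x 1 ha4 hx one_ne_zero
      rw [one_mul, hG1] at this
      exact this
    · rintro ⟨g, hg, rfl⟩
      have := E5G g a hg ha0
      rw [Set.mem_setOf_eq, this, ha4]
  -- numeric facts for fourth powers
  have P1 : G (u₀*v₀*k) = 5 := by
    have := invC u₀ v₀ 1 hu₀ hv₀ one_ne_zero
    rwa [div_one, hG1] at this
  have P2 : F (a/(k*u₀)) = 2 := by
    have := invF a 1 u₀ ha4 hG1 hu0
    rwa [mul_one, hu₀] at this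
  have P3 : F (a/(k*v₀)) = 3 := by
    have := invF a 1 v₀ ha4 hG1 hv0
    rwa [mul_one, hv₀] at this
  have g1 : G (a/(k*u₀^2)) = 5 := by
    have := ratio2G u₀ (a/(k*u₀)) 1 hu₀ P2 one_ne_zero
    rw [hG1, one_mul, div_div, show (k*u₀*u₀ : ℝ) = k*u₀^2 by ring] at this
    exact this
  have g2 : G (a/(k*v₀^2)) = 5 := by
    have := ratio3G v₀ (a/(k*v₀)) 1 hv₀ P3 one_ne_zero
    rw [hG1, one_mul, div_div, show (k*v₀*v₀ : ℝ) = k*v₀^2 by ring] at this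
    exact this
  have ha2 : G (a^2) = 5 := by
    have h5 : G ((u₀*v₀*k)*((u₀*v₀*k)*((a/(k*u₀^2))*(a/(k*v₀^2))))) = 5 :=
      mul5 _ _ P1 (mul5 _ _ P1 (mul5 _ _ g1 g2))
    rwa [show (u₀*v₀*k)*((u₀*v₀*k)*((a/(k*u₀^2))*(a/(k*v₀^2)))) = a^2 by
      field_simp] at h5
  have pow4 : ∀ x : ℝ, G x = 4 → G (x^4) = 5 := by
    intro x hx
    have hg : G (x/a) = 5 := by
      have := ratio4G a x 1 ha4 hx one_ne_zero
      rwa [one_mul, hG1] at this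
    have h5 : G ((a^2)*((a^2)*((x/a)*((x/a)*((x/a)*(x/a)))))) = 5 :=
      mul5 _ _ ha2 (mul5 _ _ ha2 (mul5 _ _ hg (mul5 _ _ hg (mul5 _ _ hg hg))))
    rwa [show (a^2)*((a^2)*((x/a)*((x/a)*((x/a)*(x/a))))) = x^4 by field_simp] at h5
  have pow2 : ∀ u : ℝ, F u = 2 → G (k^2 * u^4) = 5 := by
    intro u hu
    have hg : G (u/u₀) = 5 := by
      have := ratio2G u₀ u 1 hu₀ hu one_ne_zero
      rwa [one_mul, hG1] at this
    have hq : G (k*u₀^2/a) = 5 := by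
      have := inv5 _ g1
      rwa [inv_div] at this
    have h5 : G ((a^2)*((k*u₀^2/a)*((k*u₀^2/a)*((u/u₀)*((u/u₀)*((u/u₀)*(u/u₀))))))) = 5 :=
      mul5 _ _ ha2 (mul5 _ _ hq (mul5 _ _ hq (mul5 _ _ hg (mul5 _ _ hg (mul5 _ _ hg hg)))))
    rwa [show (a^2)*((k*u₀^2/a)*((k*u₀^2/a)*((u/u₀)*((u/u₀)*((u/u₀)*(u/u₀)))))) = k^2*u^4 by
      field_simp] at h5
  have pow3 : ∀ v : ℝ, F v = 3 → G (k^2 * v^4) = 5 := by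
    intro v hv
    have hg : G (v/v₀) = 5 := by
      have := ratio3G v₀ v 1 hv₀ hv one_ne_zero
      rwa [one_mul, hG1] at this
    have hq : G (k*v₀^2/a) = 5 := by
      have := inv5 _ g2
      rwa [inv_div] at this
    have h5 : G ((a^2)*((k*v₀^2/a)*((k*v₀^2/a)*((v/v₀)*((v/v₀)*((v/v₀)*(v/v₀))))))) = 5 :=
      mul5 _ _ ha2 (mul5 _ _ hq (mul5 _ _ hq (mul5 _ _ hg (mul5 _ _ hg (mul5 _ _ hg hg)))))
    rwa [show (a^2)*((k*v₀^2/a)*((k*v₀^2/a)*((v/v₀)*((v/v₀)*((v/v₀)*(v/v₀)))))) = k^2*v^4 by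
      field_simp] at h5
  exact ⟨mul5, inv5, set2, set3, set4, pow4, pow2, pow3⟩

/-- Claim 4 of the `n = 2` proof: `X₅` is a subgroup of the multiplicative group `ℝ^×`,
the sets `Y₂`, `Y₃`, `X₄` are cosets of `X₅` in `ℝ^×`, and the fourth power of every element
of `X₄ ∪ Y₂ ∪ Y₃` lies in `X₅`. -/
theorem group_structure_claim
    (Γ : OnePoint ℂ → ℕ)
    (hrange : Set.range Γ = {1, 2, 3, 4, 5})
    (h3 : ∀ S : Set (OnePoint ℂ), IsGenCircle S → (Γ '' S).ncard ≤ 3)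
    (h0 : Γ ((0 : ℂ) : OnePoint ℂ) = 1) (hinf : Γ ∞ = 1)
    (h1 : Γ ((1 : ℂ) : OnePoint ℂ) = 5)
    (hneg : ∃ x : ℝ, x < 0 ∧ Γ (((x : ℂ)) : OnePoint ℂ) = 4)
    (hX : Γ '' ((fun z : ℂ => (z : OnePoint ℂ)) '' {z : ℂ | z.im = 0} ∪ {∞}) = {1, 4, 5})
    (d : ℂ) (hd : d ≠ 0) (hdim : d.im ≠ 0)
    (hL : Γ '' ((fun z : ℂ => (z : OnePoint ℂ)) '' {z : ℂ | ∃ t : ℝ, z = (t : ℂ) * d} ∪ {∞}) =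
      {1, 2, 3}) :
    (∀ x ∈ xAxisColorSet Γ 5, x ≠ 0) ∧
    (1 : ℝ) ∈ xAxisColorSet Γ 5 ∧
    (∀ x ∈ xAxisColorSet Γ 5, ∀ y ∈ xAxisColorSet Γ 5, x * y ∈ xAxisColorSet Γ 5) ∧
    (∀ x ∈ xAxisColorSet Γ 5, x⁻¹ ∈ xAxisColorSet Γ 5) ∧
    (∃ a : ℝ, a ≠ 0 ∧ lineColorSet Γ d 2 = (fun g => a * g) '' xAxisColorSet Γ 5) ∧
    (∃ b : ℝ, b ≠ 0 ∧ lineColorSet Γ d 3 = (fun g => b * g) '' xAxisColorSet Γ 5) ∧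
    (∃ c : ℝ, c ≠ 0 ∧ xAxisColorSet Γ 4 = (fun g => c * g) '' xAxisColorSet Γ 5) ∧
    (∀ x ∈ xAxisColorSet Γ 4 ∪ lineColorSet Γ d 2 ∪ lineColorSet Γ d 3,
      x ^ 4 ∈ xAxisColorSet Γ 5) := by
  -- abbreviations
  obtain ⟨a, haneg, ha4⟩ := hneg
  have hk0 : (0:ℝ) < ‖d‖^2 := pow_pos (norm_pos_iff.mpr hd) 2
  have hXmem : ∀ x : ℝ, Γ ((x:ℂ) : OnePoint ℂ) = 1 ∨ Γ ((x:ℂ) : OnePoint ℂ) = 4 ∨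
      Γ ((x:ℂ) : OnePoint ℂ) = 5 := by
    intro x
    have hmem : Γ ((x:ℂ) : OnePoint ℂ) ∈ ({1, 4, 5} : Set ℕ) := by
      rw [← hX]
      exact ⟨_, Set.mem_union_left _ ⟨(x:ℂ), Complex.ofReal_im x, rfl⟩, rfl⟩
    simpa using hmem
  have hLmem : ∀ t : ℝ, Γ (((t:ℂ)*d : ℂ) : OnePoint ℂ) = 1 ∨ Γ (((t:ℂ)*d : ℂ) : OnePoint ℂ) = 2 ∨
      Γ (((t:ℂ)*d : ℂ) : OnePoint ℂ) = 3 := by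
    intro t
    have hmem : Γ (((t:ℂ)*d : ℂ) : OnePoint ℂ) ∈ ({1, 2, 3} : Set ℕ) := by
      rw [← hL]
      exact ⟨_, Set.mem_union_left _ ⟨(t:ℂ)*d, ⟨t, rfl⟩, rfl⟩, rfl⟩
    simpa using hmem
  -- extract points of colors 2 and 3 on the line
  have hex : ∀ j : ℕ, j ∈ ({1,2,3} : Set ℕ) → j ≠ 1 →
      ∃ t : ℝ, Γ (((t:ℂ)*d : ℂ) : OnePoint ℂ) = j := by
    intro j hj hj1
    have : j ∈ Γ '' ((fun z : ℂ => (z : OnePoint ℂ)) ''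
        {z : ℂ | ∃ t : ℝ, z = (t : ℂ) * d} ∪ {∞}) := by rw [hL]; exact hj
    obtain ⟨z, hz, hΓ⟩ := this
    rcases hz with ⟨w, ⟨t, rfl⟩, rfl⟩ | hz
    · exact ⟨t, hΓ⟩
    · rw [Set.mem_singleton_iff] at hz
      subst hz
      rw [hinf] at hΓ
      exact absurd hΓ.symm hj1
  obtain ⟨u₀, hu₀⟩ := hex 2 (by norm_num) (by norm_num)
  obtain ⟨v₀, hv₀⟩ := hex 3 (by norm_num) (by norm_num)
  -- basic color values
  have hG0 : Γ (((0:ℝ):ℂ) : OnePoint ℂ) = 1 := by rw [Complex.ofReal_zero]; exact h0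
  have hG1 : Γ (((1:ℝ):ℂ) : OnePoint ℂ) = 5 := by rw [Complex.ofReal_one]; exact h1
  have hF0 : Γ ((((0:ℝ):ℂ)*d : ℂ) : OnePoint ℂ) = 1 := by
    rw [Complex.ofReal_zero, zero_mul]; exact h0
  -- apply the core combinatorial lemma
  obtain ⟨mul5, inv5, set2, set3, set4, pow4, pow2, pow3⟩ :=
    core (‖d‖^2) hk0 (fun x : ℝ => Γ ((x:ℂ) : OnePoint ℂ))
      (fun t : ℝ => Γ (((t:ℂ)*d : ℂ) : OnePoint ℂ)) hG0 hG1 hF0 a ha4 u₀ hu₀ v₀ hv₀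
      (fun u v x₁ x₂ hu hv hp => ruleA Γ hrange h3 d hdim hXmem x₁ x₂ u v hp hu hv)
      (fun p q t₁ t₂ hp hq hpr => ruleB Γ hrange h3 d hdim hLmem p q t₁ t₂ hpr hp hq)
  -- restate the conclusions in beta-reduced form
  have mul5' : ∀ x y : ℝ, Γ ((x:ℂ) : OnePoint ℂ) = 5 → Γ ((y:ℂ) : OnePoint ℂ) = 5 →
      Γ (((x*y:ℝ):ℂ) : OnePoint ℂ) = 5 := mul5
  have inv5' : ∀ x : ℝ, Γ ((x:ℂ) : OnePoint ℂ) = 5 → Γ (((x⁻¹:ℝ):ℂ) : OnePoint ℂ) = 5 := inv5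
  have set2' : {t : ℝ | Γ (((t:ℂ)*d : ℂ) : OnePoint ℂ) = 2}
      = (fun g => u₀ * g) '' {x : ℝ | Γ ((x:ℂ) : OnePoint ℂ) = 5} := set2
  have set3' : {t : ℝ | Γ (((t:ℂ)*d : ℂ) : OnePoint ℂ) = 3}
      = (fun g => v₀ * g) '' {x : ℝ | Γ ((x:ℂ) : OnePoint ℂ) = 5} := set3
  have set4' : {x : ℝ | Γ ((x:ℂ) : OnePoint ℂ) = 4}
      = (fun g => a * g) '' {x : ℝ | Γ ((x:ℂ) : OnePoint ℂ) = 5} := set4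
  have pow4' : ∀ x : ℝ, Γ ((x:ℂ) : OnePoint ℂ) = 4 → Γ (((x^4:ℝ):ℂ) : OnePoint ℂ) = 5 := pow4
  have pow2' : ∀ u : ℝ, Γ (((u:ℂ)*d : ℂ) : OnePoint ℂ) = 2 →
      Γ ((((‖d‖^2)^2*u^4:ℝ):ℂ) : OnePoint ℂ) = 5 := pow2
  have pow3' : ∀ v : ℝ, Γ (((v:ℂ)*d : ℂ) : OnePoint ℂ) = 3 →
      Γ ((((‖d‖^2)^2*v^4:ℝ):ℂ) : OnePoint ℂ) = 5 := pow3
  have hu0ne : u₀ ≠ 0 := by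
    rintro rfl; rw [hF0] at hu₀; norm_num at hu₀
  have hv0ne : v₀ ≠ 0 := by
    rintro rfl; rw [hF0] at hv₀; norm_num at hv₀
  have ha0 : a ≠ 0 := ne_of_lt haneg
  have hsne : signedNorm d ≠ 0 := by
    have hdn : ‖d‖ ≠ 0 := norm_ne_zero_iff.mpr hd
    unfold signedNorm
    split_ifs <;> simpa using hdn
  have hs2 : (signedNorm d)^2 = ‖d‖^2 := by
    unfold signedNorm; split_ifs <;> ring
  refine ⟨?_, ?_, ?_, ?_, ?_, ?_, ?_, ?_⟩
  · -- no zero in X₅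
    intro x hx
    rw [xset] at hx
    rintro rfl
    rw [Set.mem_setOf_eq, hG0] at hx
    exact absurd hx (by norm_num)
  · -- 1 ∈ X₅
    rw [xset]
    exact hG1
  · -- multiplicative closure
    intro x hx y hy
    rw [xset] at hx hy ⊢
    exact mul5' x y hx hy
  · -- inverse closure
    intro x hx
    rw [xset] at hx ⊢
    exact inv5' x hx
  · -- Y₂ is a coset
    refine ⟨signedNorm d * u₀, mul_ne_zero hsne hu0ne, ?_⟩
    rw [lset Γ d hdim 2, xset, set2', Set.image_image]
    congr 1
    funext g
    ring
  · -- Y₃ is a coset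
    refine ⟨signedNorm d * v₀, mul_ne_zero hsne hv0ne, ?_⟩
    rw [lset Γ d hdim 3, xset, set3', Set.image_image]
    congr 1
    funext g
    ring
  · -- X₄ is a coset
    refine ⟨a, ha0, ?_⟩
    rw [xset, xset, set4']
  · -- fourth powers
    intro x hx
    rcases hx with (hx | hx) | hx
    · rw [xset] at hx
      rw [xset]
      exact pow4' x hx
    · rw [lset Γ d hdim 2] at hx
      obtain ⟨t, ht2, rfl⟩ := hx
      rw [xset]
      have e : ((signedNorm d * t)^4 : ℝ) = (‖d‖^2)^2*t^4 := by
        rw [show ((signedNorm d * t)^4 : ℝ) = ((signedNorm d)^2)^2*t^4 by ring, hs2]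
      rw [Set.mem_setOf_eq, e]
      exact pow2' t ht2
    · rw [lset Γ d hdim 3] at hx
      obtain ⟨t, ht3, rfl⟩ := hx
      rw [xset]
      have e : ((signedNorm d * t)^4 : ℝ) = (‖d‖^2)^2*t^4 := by
        rw [show ((signedNorm d * t)^4 : ℝ) = ((signedNorm d)^2)^2*t^4 by ring, hs2]
      rw [Set.mem_setOf_eq, e]
      exact pow3' t ht3
end
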